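/- arXiv:1207.0935 — 3 statements merged into one kernel-verified Lean document; each statement's English description precedes it below -/
import Mathlib

section
/- Let F be a strategyproof 2-facility mechanism on the line with approximation ratio at most ρ for 3 agents, and suppose the left-threshold of (i, a) is p ∈ ℝ (finite). Then for any 3-agent instance x with x_i = a and x_j, x_k ∈ (a, p], F_2(x) = max(x_j, x_k). -/
noncomputable section

/-- Cost of an agent at location `a` under a pair of facilities. -/
def fcost (a : ℝ) (y : ℝ × ℝ) : ℝ := min |a - y.1| |a - y.2|

/-- Social cost: sum of the agents' distances to their nearest facility. -/
def scost {n : ℕ} (x : Fin n → ℝ) (y : ℝ × ℝ) : ℝ := ∑ i, fcost (x i) y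

/-- Optimal social cost over all placements of two facilities. -/
def optCost {n : ℕ} (x : Fin n → ℝ) : ℝ := ⨅ y : ℝ × ℝ, scost x y

/-- The mechanism outputs its facilities in increasing order. -/
def Ordered {n : ℕ} (F : (Fin n → ℝ) → ℝ × ℝ) : Prop := ∀ x, (F x).1 ≤ (F x).2

/-- No agent can strictly decrease her cost by misreporting her location. -/
def Strategyproof {n : ℕ} (F : (Fin n → ℝ) → ℝ × ℝ) : Prop :=
  ∀ (x : Fin n → ℝ) (i : Fin n) (y : ℝ),
    fcost (x i) (F x) ≤ fcost (x i) (F (Function.update x i y))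

/-- `F` has approximation ratio (at most) `ρ` for the social cost. -/
def ApproxRatio {n : ℕ} (F : (Fin n → ℝ) → ℝ × ℝ) (ρ : ℝ) : Prop :=
  ∀ x, scost x (F x) ≤ ρ * optCost x

/-- An `(i|j,k)`-well-separated 3-agent instance. -/
def WellSep (ρ : ℝ) (x : Fin 3 → ℝ) (i j k : Fin 3) : Prop :=
  x i < x j ∧ x j < x k ∧ ρ * (x k - x j) < x j - x i

/-- An `i`-left-well-separated 3-agent instance: agent `i` is isolated on the
left of the two nearby agents `j` and `k`. -/
def LeftWS (ρ : ℝ) (x : Fin 3 → ℝ) (i j k : Fin 3) : Prop :=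
  x i < min (x j) (x k) ∧
    ρ * (max (x j) (x k) - min (x j) (x k)) < min (x j) (x k) - x i

/-- The median of three reals. -/
def med3 (a b c : ℝ) : ℝ := max (min a b) (min (max a b) c)

lemma fcost_nonneg (a : ℝ) (y : ℝ × ℝ) : 0 ≤ fcost a y :=
  le_min (abs_nonneg _) (abs_nonneg _)

lemma fcost_le1 (a : ℝ) (y : ℝ × ℝ) : fcost a y ≤ |a - y.1| := min_le_left _ _
lemma fcost_le2 (a : ℝ) (y : ℝ × ℝ) : fcost a y ≤ |a - y.2| := min_le_right _ _

lemma fcost_fst (u w : ℝ) : fcost u (u, w) = 0 := by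
  have h : |u - (u, w).1| = 0 := by simp
  have := fcost_le1 u (u, w)
  have := fcost_nonneg u (u, w)
  linarith [h ▸ fcost_le1 u (u, w)]

lemma fcost_snd (u w : ℝ) : fcost u (w, u) = 0 := by
  have h : |u - (w, u).2| = 0 := by simp
  have := fcost_nonneg u (w, u)
  linarith [h ▸ fcost_le2 u (w, u)]

lemma scost_nonneg {n : ℕ} (x : Fin n → ℝ) (y : ℝ × ℝ) : 0 ≤ scost x y :=
  Finset.sum_nonneg fun _ _ => fcost_nonneg _ _

lemma optCost_nonneg {n : ℕ} (x : Fin n → ℝ) : 0 ≤ optCost x :=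
  le_ciInf fun y => scost_nonneg x y

lemma optCost_le {n : ℕ} (x : Fin n → ℝ) (y : ℝ × ℝ) : optCost x ≤ scost x y :=
  ciInf_le ⟨0, by rintro _ ⟨y', rfl⟩; exact scost_nonneg x y'⟩ y

lemma sum3 (f : Fin 3 → ℝ) {i j k : Fin 3} (hij : i ≠ j) (hik : i ≠ k) (hjk : j ≠ k) :
    (∑ l, f l) = f i + f j + f k := by
  fin_cases i <;> fin_cases j <;> fin_cases k <;> simp_all [Fin.sum_univ_three] <;> ring

lemma scost_eq3 (x : Fin 3 → ℝ) (y : ℝ × ℝ) {i j k : Fin 3}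
    (hij : i ≠ j) (hik : i ≠ k) (hjk : j ≠ k) :
    scost x y = fcost (x i) y + fcost (x j) y + fcost (x k) y :=
  sum3 (fun l => fcost (x l) y) hij hik hjk

lemma fcost_eq_zero {u : ℝ} {y : ℝ × ℝ} (h : fcost u y = 0) : y.1 = u ∨ y.2 = u := by
  rcases min_choice |u - y.1| |u - y.2| with hc | hc
  · left
    have h2 : |u - y.1| = 0 := hc.symm.trans h
    have := abs_eq_zero.mp h2
    linarith
  · right
    have h2 : |u - y.2| = 0 := hc.symm.trans h
    have := abs_eq_zero.mp h2
    linarith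

lemma fcost_add_lip (u u' : ℝ) (y : ℝ × ℝ) : fcost u y ≤ fcost u' y + |u - u'| := by
  rcases le_total |u' - y.1| |u' - y.2| with hcc | hcc
  · have h1 : fcost u' y = |u' - y.1| := min_eq_left hcc
    rw [h1]
    refine (fcost_le1 _ _).trans ?_
    calc |u - y.1| = |(u' - y.1) + (u - u')| := by ring_nf
      _ ≤ |u' - y.1| + |u - u'| := abs_add_le _ _
  · have h1 : fcost u' y = |u' - y.2| := min_eq_right hcc
    rw [h1]
    refine (fcost_le2 _ _).trans ?_
    calc |u - y.2| = |(u' - y.2) + (u - u')| := by ring_nf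
      _ ≤ |u' - y.2| + |u - u'| := abs_add_le _ _

def Pz (F : (Fin 3 → ℝ) → ℝ × ℝ) (x : Fin 3 → ℝ) (k : Fin 3) (v : ℝ) : ℝ × ℝ :=
  F (Function.update x k v)

def hh (F : (Fin 3 → ℝ) → ℝ × ℝ) (x : Fin 3 → ℝ) (k : Fin 3) (v : ℝ) : ℝ :=
  fcost v (Pz F x k v)

lemma hh_nonneg (F : (Fin 3 → ℝ) → ℝ × ℝ) (x : Fin 3 → ℝ) (k : Fin 3) (v : ℝ) :
    0 ≤ hh F x k v := fcost_nonneg _ _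

lemma hh_le {F : (Fin 3 → ℝ) → ℝ × ℝ} (hsp : Strategyproof F) (x : Fin 3 → ℝ) (k : Fin 3)
    (v v' : ℝ) : hh F x k v ≤ fcost v (Pz F x k v') := by
  have h1 := hsp (Function.update x k v) k v'
  simpa [hh, Pz, Function.update_self, Function.update_idem] using h1

lemma hh_cont {F : (Fin 3 → ℝ) → ℝ × ℝ} (hsp : Strategyproof F) (x : Fin 3 → ℝ) (k : Fin 3) :
    Continuous (hh F x k) := by
  have hl : LipschitzWith 1 (hh F x k) := by
    apply LipschitzWith.of_dist_le_mul
    intro v v'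
    rw [Real.dist_eq, Real.dist_eq, NNReal.coe_one, one_mul, abs_sub_le_iff]
    constructor
    · have h1 := hh_le hsp x k v v'
      have h2 := fcost_add_lip v v' (Pz F x k v')
      have h3 : fcost v' (Pz F x k v') = hh F x k v' := rfl
      linarith
    · have h1 := hh_le hsp x k v' v
      have h2 := fcost_add_lip v' v (Pz F x k v)
      have h3 : fcost v (Pz F x k v) = hh F x k v := rfl
      have h4 : |v' - v| = |v - v'| := abs_sub_comm _ _
      linarith
  exact hl.continuous

-- The forbidden-interval lemma (Lemma A / L3)
lemma forbidden (F : (Fin 3 → ℝ) → ℝ × ℝ) (ρ : ℝ) (hρ : 1 ≤ ρ)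
    (hsp : Strategyproof F) (happ : ApproxRatio F ρ)
    (i j k : Fin 3) (hij : i ≠ j) (hik : i ≠ k) (hjk : j ≠ k)
    (a p : ℝ)
    (hsep : ∀ y : Fin 3 → ℝ, y i = a → LeftWS ρ y i j k →
      y j ≤ p → y k ≤ p → (F y).2 = max (y j) (y k))
    (x : Fin 3 → ℝ) (hxa : x i = a)
    (v : ℝ) (hav : a < v) (hvp : v ≤ p)
    (g : ℝ) (hgmem : g = (Pz F x k v).1 ∨ g = (Pz F x k v).2)
    (hg1 : (ρ*v + a)/(ρ+1) < g) (hg2 : g < v) : False := by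
  have hρ0 : (0:ℝ) < ρ := by linarith
  have hρ1 : (0:ℝ) < ρ + 1 := by linarith
  have hρ2 : (0:ℝ) < ρ + 2 := by linarith
  have hga : a < g := by
    refine lt_of_le_of_lt ?_ hg1
    rw [le_div_iff₀ hρ1]
    nlinarith
  have e1 : ρ*v + a < g*(ρ+1) := (div_lt_iff₀ hρ1).mp hg1
  set s := ((a + (ρ+1)*v)/(ρ+2) + (g+v)/2)/2 with hs
  have key1 : (a + (ρ+1)*v)/(ρ+2) < (g+v)/2 := by
    rw [div_lt_div_iff₀ hρ2 (by norm_num : (0:ℝ) < 2)]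
    nlinarith
  have hsL : (a + (ρ+1)*v)/(ρ+2) < s := by rw [hs]; linarith
  have hsR : s < (g+v)/2 := by rw [hs]; linarith
  have hsa : a < s := by
    refine lt_trans ?_ hsL
    rw [lt_div_iff₀ hρ2]
    nlinarith
  have hsv : s < v := hsR.trans (by linarith)
  have hs2 : (ρ+1)*(v - s) ≤ s - a := by
    have h2 := (div_lt_iff₀ hρ2).mp hsL
    nlinarith
  have hws : ρ*(v - s) < s - a := by nlinarith
  -- the well-separated instance y
  set y := Function.update (Function.update x k v) j s with hy
  have yi : y i = a := by
    rw [hy, Function.update_of_ne hij, Function.update_of_ne hik, hxa]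
  have yj : y j = s := by rw [hy, Function.update_self]
  have yk : y k = v := by rw [hy, Function.update_of_ne (Ne.symm hjk), Function.update_self]
  have hmin : min (y j) (y k) = s := by rw [yj, yk]; exact min_eq_left hsv.le
  have hmax : max (y j) (y k) = v := by rw [yj, yk]; exact max_eq_right hsv.le
  have hy2 : (F y).2 = v := by
    rw [hsep y yi ⟨by rw [hmin, yi]; exact hsa, by rw [hmin, hmax, yi]; exact hws⟩
      (by rw [yj]; exact hsv.le.trans hvp) (by rw [yk]; exact hvp), hmax]
  have hoy : optCost y ≤ v - s := by
    refine (optCost_le y ((a, v) : ℝ × ℝ)).trans ?_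
    rw [scost_eq3 y ((a,v) : ℝ × ℝ) hij hik hjk, yi, yj, yk, fcost_fst, fcost_snd]
    have h1 : |s - v| = v - s := by rw [abs_sub_comm]; exact abs_of_nonneg (by linarith)
    have h2 : fcost s ((a,v) : ℝ × ℝ) ≤ v - s := by
      refine (fcost_le2 _ _).trans ?_
      simp only []
      rw [h1]
    linarith
  have hsc : scost y (F y) ≤ ρ*(v - s) :=
    (happ y).trans (mul_le_mul_of_nonneg_left hoy hρ0.le)
  have hterm_i : fcost a (F y) ≤ ρ*(v-s) := by
    have hrep := scost_eq3 y (F y) hij hik hjk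
    rw [yi, yj, yk] at hrep
    have n1 := fcost_nonneg s (F y)
    have n2 := fcost_nonneg v (F y)
    linarith
  have hc' : |a - (F y).1| ≤ ρ*(v-s) := by
    have hdef : fcost a (F y) = min |a - (F y).1| |a - v| := by rw [fcost, hy2]
    rw [hdef] at hterm_i
    rcases min_le_iff.mp hterm_i with h | h
    · exact h
    · exfalso
      have hva : |a - v| = v - a := by rw [abs_sub_comm]; exact abs_of_nonneg (by linarith)
      rw [hva] at h
      linarith
  have hdev : v - s ≤ fcost s (Pz F x k v) := by
    have h1 := hsp y j (x j)
    have e2 : Function.update y j (x j) = Function.update x k v := by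
      rw [hy, Function.update_idem]
      conv_lhs => rw [show x j = Function.update x k v j from
        (Function.update_of_ne hjk v x).symm]
      exact Function.update_eq_self j _
    rw [yj, e2] at h1
    have h2 : v - s ≤ fcost s (F y) := by
      have hxx : fcost s (F y) = min |s - (F y).1| |s - v| := by rw [fcost, hy2]
      have h3 : |s - v| = v - s := by rw [abs_sub_comm]; exact abs_of_nonneg (by linarith)
      have h4 : v - s ≤ |s - (F y).1| := by
        have t1 : |s - a| ≤ |s - (F y).1| + |(F y).1 - a| := abs_sub_le s (F y).1 a
        have t2 : |s - a| = s - a := abs_of_nonneg (by linarith)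
        have t3 : |(F y).1 - a| = |a - (F y).1| := abs_sub_comm _ _
        rw [t2, t3] at t1
        linarith
      rw [hxx]
      exact le_min h4 h3.ge
    exact h2.trans h1
  have hup2 : fcost s (Pz F x k v) ≤ |s - g| := by
    rcases hgmem with rfl | rfl
    · exact fcost_le1 _ _
    · exact fcost_le2 _ _
  have habs : |s - g| < v - s := by
    rw [abs_sub_lt_iff]
    constructor
    · linarith
    · linarith
  linarith

theorem auxR (F : (Fin 3 → ℝ) → ℝ × ℝ) (ρ : ℝ) (hρ : 1 ≤ ρ)
    (hord : Ordered F) (hsp : Strategyproof F) (happ : ApproxRatio F ρ)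
    (i j k : Fin 3) (hij : i ≠ j) (hik : i ≠ k) (hjk : j ≠ k)
    (a p : ℝ)
    (hsep : ∀ y : Fin 3 → ℝ, y i = a → LeftWS ρ y i j k →
      y j ≤ p → y k ≤ p → (F y).2 = max (y j) (y k))
    (x : Fin 3 → ℝ) (hxa : x i = a) (hj : a < x j) (hjk2 : x j ≤ x k) (hkp : x k ≤ p) :
    (F x).2 = x k := by
  have hρ0 : (0:ℝ) < ρ := by linarith
  have hρ1 : (0:ℝ) < ρ + 1 := by linarith
  have ham : a < x k := lt_of_lt_of_le hj hjk2
  rcases eq_or_lt_of_le hjk2 with heq | hlt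
  · -- degenerate case x j = x k
    have hopt : optCost x = 0 := by
      refine le_antisymm ((optCost_le x ((a, x k) : ℝ × ℝ)).trans ?_) (optCost_nonneg x)
      rw [scost_eq3 x ((a, x k) : ℝ × ℝ) hij hik hjk, hxa, heq, fcost_fst, fcost_snd]
      norm_num
    have h0 : scost x (F x) ≤ 0 := by
      have := happ x
      rw [hopt, mul_zero] at this
      exact this
    have hrep := scost_eq3 x (F x) hij hik hjk
    have n1 := fcost_nonneg (x i) (F x)
    have n2 := fcost_nonneg (x j) (F x)
    have n3 := fcost_nonneg (x k) (F x)
    have fI : fcost (x i) (F x) = 0 := le_antisymm (by linarith) n1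
    have fK : fcost (x k) (F x) = 0 := le_antisymm (by linarith) n3
    rcases fcost_eq_zero fK with hc1 | hc2
    · rcases fcost_eq_zero fI with hd1 | hd2
      · exfalso; rw [hxa] at hd1; rw [hd1] at hc1; linarith
      · exfalso
        have := hord x
        rw [hxa] at hd2
        rw [hc1, hd2] at this
        linarith
    · exact hc2
  · -- main case x j < x k
    -- coordinates of update x k v
    have zi : ∀ v : ℝ, Function.update x k v i = a := fun v => by
      rw [Function.update_of_ne hik, hxa]
    have zj : ∀ v : ℝ, Function.update x k v j = x j := fun v =>
      Function.update_of_ne hjk v x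
    have zk : ∀ v : ℝ, Function.update x k v k = v := fun v =>
      Function.update_self k v x
    -- base: hh at x j is 0
    have hht : hh F x k (x j) = 0 := by
      have hopt : optCost (Function.update x k (x j)) = 0 := by
        refine le_antisymm ((optCost_le _ ((a, x j) : ℝ × ℝ)).trans ?_) (optCost_nonneg _)
        rw [scost_eq3 _ ((a, x j) : ℝ × ℝ) hij hik hjk, zi, zj, zk, fcost_fst, fcost_snd]
        norm_num
      have h0 : scost (Function.update x k (x j)) (F (Function.update x k (x j))) ≤ 0 := by
        have := happ (Function.update x k (x j))
        rw [hopt, mul_zero] at this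
        exact this
      have hrep := scost_eq3 (Function.update x k (x j)) (F (Function.update x k (x j)))
        hij hik hjk
      rw [zi, zj, zk] at hrep
      have n1 := fcost_nonneg a (F (Function.update x k (x j)))
      have n2 := fcost_nonneg (x j) (F (Function.update x k (x j)))
      have : fcost (x j) (F (Function.update x k (x j))) = 0 := by linarith
      exact this
    set A := Set.Icc (x j) (x k) ∩ (hh F x k) ⁻¹' {0} with hA
    have hAcomp : IsCompact A :=
      isCompact_Icc.inter_right (isClosed_singleton.preimage (hh_cont hsp x k))
    have hAne : A.Nonempty := ⟨x j, ⟨le_refl _, hlt.le⟩, by simp [hht]⟩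
    set w := sSup A with hwdef
    have hwA : w ∈ A := hAcomp.sSup_mem hAne
    obtain ⟨⟨hw1, hw2⟩, hw0'⟩ := hwA
    have hw0 : hh F x k w = 0 := by simpa using hw0'
    have hwa : a < w := lt_of_lt_of_le hj hw1
    -- facility position lemma
    have hfac : ∀ v : ℝ, w ≤ v → v ≤ w + min (x k - w) ((w - a)/(3*(ρ+1))) →
        ((Pz F x k v).1 = v + hh F x k v ∨ (Pz F x k v).2 = v + hh F x k v) := by
      intro v hv1 hv2
      have hva : a < v := lt_of_lt_of_le hwa hv1
      have hvm : v ≤ x k := by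
        have := min_le_left (x k - w) ((w - a)/(3*(ρ+1)))
        linarith
      have hvp : v ≤ p := hvm.trans hkp
      have hfw : (Pz F x k w).1 = w ∨ (Pz F x k w).2 = w := fcost_eq_zero hw0
      have hhv1 : hh F x k v ≤ v - w := by
        refine (hh_le hsp x k v w).trans ?_
        rcases hfw with hcc | hcc
        · refine (fcost_le1 _ _).trans ?_
          rw [hcc]
          exact le_of_eq (abs_of_nonneg (by linarith))
        · refine (fcost_le2 _ _).trans ?_
          rw [hcc]
          exact le_of_eq (abs_of_nonneg (by linarith))
      have hbound : hh F x k v < (v - a)/(ρ+1) := by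
        have hmle : v - w ≤ (w - a)/(3*(ρ+1)) := by
          have := min_le_right (x k - w) ((w - a)/(3*(ρ+1)))
          linarith
        have hq : (w - a)/(3*(ρ+1)) < (v - a)/(ρ+1) := by
          rw [div_lt_div_iff₀ (by positivity) hρ1]
          nlinarith
        linarith
      have key : ∀ gv : ℝ, (gv = (Pz F x k v).1 ∨ gv = (Pz F x k v).2) →
          |v - gv| = hh F x k v → gv = v + hh F x k v := by
        intro gv hmem habs
        rcases le_or_gt gv v with hle | hgt
        · -- gv ≤ v : gv = v - hh
          have h5 : v - gv = hh F x k v := by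
            rw [← habs]; exact (abs_of_nonneg (by linarith)).symm
          by_cases hz : hh F x k v = 0
          · rw [hz, add_zero]; linarith
          · exfalso
            have hpos : 0 < hh F x k v := lt_of_le_of_ne (hh_nonneg F x k v) (Ne.symm hz)
            refine forbidden F ρ hρ hsp happ i j k hij hik hjk a p hsep x hxa v hva hvp
              gv hmem ?_ (by linarith)
            -- (ρ v + a)/(ρ+1) < gv = v - hh
            rw [div_lt_iff₀ hρ1]
            have : hh F x k v * (ρ+1) < v - a := by
              rw [← lt_div_iff₀ hρ1]; exact hbound
            nlinarith
        · -- v < gv: |v - gv| = gv - v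
          have h5 : gv - v = hh F x k v := by
            rw [← habs, abs_sub_comm]; exact (abs_of_nonneg (by linarith)).symm
          linarith
      rcases min_choice |v - (Pz F x k v).1| |v - (Pz F x k v).2| with hc | hc
      · left
        exact key _ (Or.inl rfl) (by rw [← hc]; rfl)
      · right
        exact key _ (Or.inr rfl) (by rw [← hc]; rfl)
    -- w = x k
    have hwm : w = x k := by
      by_contra hne
      have hwlt : w < x k := lt_of_le_of_ne hw2 hne
      set δ := min (x k - w) ((w - a)/(3*(ρ+1))) with hδdef
      have hδ : 0 < δ := lt_min (by linarith) (div_pos (by linarith) (by positivity))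
      set u := w + δ with hu
      have hup : w < u := by rw [hu]; linarith
      have hum : u ≤ x k := by
        have := min_le_left (x k - w) ((w - a)/(3*(ρ+1)))
        rw [hu]; linarith
      have hcξ : ContinuousOn (fun v => v + hh F x k v) (Set.Icc w u) :=
        (continuous_id.add (hh_cont hsp x k)).continuousOn
      have hmem : u ∈ Set.Icc ((fun v => v + hh F x k v) w) ((fun v => v + hh F x k v) u) := by
        constructor
        · show w + hh F x k w ≤ u
          rw [hw0]; linarith
        · show u ≤ u + hh F x k u
          linarith [hh_nonneg F x k u]
      obtain ⟨v', hv'mem, hv'eq⟩ := intermediate_value_Icc hup.le hcξ hmem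
      obtain ⟨hv'1, hv'2⟩ := hv'mem
      have hfv := hfac v' hv'1 hv'2
      have hhu : hh F x k u ≤ 0 := by
        have h1 := hh_le hsp x k u v'
        rcases hfv with hc | hc
        · have h2 : (Pz F x k v').1 = u := by rw [hc]; exact hv'eq
          calc hh F x k u ≤ fcost u (Pz F x k v') := h1
            _ ≤ |u - (Pz F x k v').1| := fcost_le1 _ _
            _ = 0 := by rw [h2, sub_self, abs_zero]
        · have h2 : (Pz F x k v').2 = u := by rw [hc]; exact hv'eq
          calc hh F x k u ≤ fcost u (Pz F x k v') := h1
            _ ≤ |u - (Pz F x k v').2| := fcost_le2 _ _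
            _ = 0 := by rw [h2, sub_self, abs_zero]
      have hu0 : hh F x k u = 0 := le_antisymm hhu (hh_nonneg F x k u)
      have huA : u ∈ A := ⟨⟨by linarith, hum⟩, by simp [hu0]⟩
      have := le_csSup hAcomp.bddAbove huA
      rw [← hwdef] at this
      linarith
    -- conclude
    have hm0 : fcost (x k) (F x) = 0 := by
      have h1 : hh F x k (x k) = 0 := by rw [← hwm]; exact hw0
      have h2 : Function.update x k (x k) = x := Function.update_eq_self k x
      rw [hh, Pz, h2] at h1
      exact h1
    rcases fcost_eq_zero hm0 with hc1 | hc2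
    · -- (F x).1 = x k : contradiction via agent i's deviation
      exfalso
      have hord1 := hord x
      set w' := Function.update x i (x j) with hw'
      have w'i : w' i = x j := Function.update_self i (x j) x
      have w'j : w' j = x j := Function.update_of_ne (Ne.symm hij) _ _
      have w'k : w' k = x k := Function.update_of_ne (Ne.symm hik) _ _
      have hoptw' : optCost w' = 0 := by
        refine le_antisymm ((optCost_le w' ((x j, x k) : ℝ × ℝ)).trans ?_) (optCost_nonneg _)
        rw [scost_eq3 w' ((x j, x k) : ℝ × ℝ) hij hik hjk, w'i, w'j, w'k, fcost_fst, fcost_snd]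
        norm_num
      have hsw' : scost w' (F w') ≤ 0 := by
        have := happ w'
        rw [hoptw', mul_zero] at this
        exact this
      have hjw' : fcost (x j) (F w') = 0 := by
        have hrep := scost_eq3 w' (F w') hij hik hjk
        rw [w'i, w'j, w'k] at hrep
        have n1 := fcost_nonneg (x j) (F w')
        have n3 := fcost_nonneg (x k) (F w')
        linarith
      have hidev : fcost a (F x) ≤ x j - a := by
        have h1 := hsp x i (x j)
        rw [hxa, ← hw'] at h1
        refine h1.trans ?_
        rcases fcost_eq_zero hjw' with hc | hc
        · refine (fcost_le1 _ _).trans ?_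
          rw [hc, abs_sub_comm]
          exact le_of_eq (abs_of_nonneg (by linarith))
        · refine (fcost_le2 _ _).trans ?_
          rw [hc, abs_sub_comm]
          exact le_of_eq (abs_of_nonneg (by linarith))
      have hlow : x k - a ≤ fcost a (F x) := by
        have e1 : |a - (F x).1| = x k - a := by
          rw [hc1, abs_sub_comm]
          exact abs_of_nonneg (by linarith)
        have e2 : x k - a ≤ |a - (F x).2| := by
          have h3 : x k ≤ (F x).2 := hc1 ▸ hord1
          rw [abs_sub_comm]
          have := abs_of_nonneg (by linarith : (0:ℝ) ≤ (F x).2 - a)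
          rw [this]
          linarith
        have hdef : fcost a (F x) = min |a - (F x).1| |a - (F x).2| := rfl
        rw [hdef, e1]
        exact le_min le_rfl e2
      linarith
    · exact hc2

/-- Lemma `non-separated-inside`: if `(i, a)` has finite left-threshold `p`,
then for any 3-agent instance `x` with `x_i = a` and `x_j, x_k ∈ (a, p]`,
the rightmost facility is at `max(x_j, x_k)`. -/
theorem non_separated_inside (F : (Fin 3 → ℝ) → ℝ × ℝ) (ρ : ℝ) (hρ : 1 ≤ ρ)
    (hord : Ordered F) (hsp : Strategyproof F) (happ : ApproxRatio F ρ)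
    (i j k : Fin 3) (hij : i ≠ j) (hik : i ≠ k) (hjk : j ≠ k)
    (a p : ℝ) (hpa : a ≤ p)
    (hsep : ∀ y : Fin 3 → ℝ, y i = a → LeftWS ρ y i j k →
      y j ≤ p → y k ≤ p → (F y).2 = max (y j) (y k))
    (x : Fin 3 → ℝ) (hxa : x i = a)
    (hj : a < x j) (hj' : x j ≤ p) (hk : a < x k) (hk' : x k ≤ p) :
    (F x).2 = max (x j) (x k) := by
  rcases le_total (x j) (x k) with h | h
  · rw [max_eq_right h]
    exact auxR F ρ hρ hord hsp happ i j k hij hik hjk a p hsep x hxa hj h hk'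
  · rw [max_eq_left h]
    refine auxR F ρ hρ hord hsp happ i k j hik hij (Ne.symm hjk) a p ?_ x hxa hk h hj'
    intro y hy hLW hyk hyj
    rw [max_comm]
    refine hsep y hy ?_ hyj hyk
    constructor
    · rw [min_comm]; exact hLW.1
    · rw [min_comm (y j) (y k), max_comm (y j) (y k)]; exact hLW.2
end
end

section
/- Let F be a strategyproof 2-facility mechanism on the line with approximation ratio at most ρ for 3 agents. Suppose (i, a) has left-preferred agent j and finite left-threshold p. Then for any instance x with a = x_i < x_j < x_k and x_k − p > ρ·(p − x_i), F places a facility at x_j. -/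
noncomputable section

/-- Lemma `approx`: if `(i, a)` has left-preferred agent `j` and finite
left-threshold `p`, then for any instance `x` with `a = x_i < x_j < x_k` and
`x_k − p > ρ(p − x_i)`, `F` places a facility at `x_j`. -/
theorem approx_lemma (F : (Fin 3 → ℝ) → ℝ × ℝ) (ρ : ℝ) (hρ : 1 ≤ ρ)
    (hord : Ordered F) (hsp : Strategyproof F) (happ : ApproxRatio F ρ)
    (i j k : Fin 3) (hij : i ≠ j) (hik : i ≠ k) (hjk : j ≠ k)
    (a p : ℝ) (hpa : a ≤ p)
    (hsep : ∀ y : Fin 3 → ℝ, y i = a → LeftWS ρ y i j k →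
      (p ≤ y j → (F y).2 = y j) ∧ (y j < p → (F y).2 = med3 p (y j) (y k)))
    (x : Fin 3 → ℝ) (hxa : x i = a) (hxj : x i < x j) (hxk : x j < x k)
    (hfar : ρ * (p - x i) < x k - p) :
    (F x).1 = x j ∨ (F x).2 = x j := by

  classical
  have hρ0 : (0:ℝ) ≤ ρ := le_trans zero_le_one hρ
  have haj : a < x j := by rw [← hxa]; exact hxj
  have hfar' : ρ * (p - a) < x k - p := by rwa [hxa] at hfar
  have hpk : p < x k := by nlinarith [mul_nonneg hρ0 (sub_nonneg.mpr hpa)]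
  have hak : a < x k := lt_trans haj hxk
  -- basic facts about fcost/scost/optCost
  have fcost_nonneg : ∀ (u : ℝ) (Y : ℝ × ℝ), 0 ≤ fcost u Y := by
    intro u Y; exact le_min (abs_nonneg _) (abs_nonneg _)
  have scost_nonneg : ∀ (y : Fin 3 → ℝ) (Y : ℝ × ℝ), 0 ≤ scost y Y := by
    intro y Y; exact Finset.sum_nonneg fun m _ => fcost_nonneg _ _
  have optCost_le : ∀ (y : Fin 3 → ℝ) (Y : ℝ × ℝ), optCost y ≤ scost y Y := by
    intro y Y
    apply ciInf_le
    refine ⟨0, ?_⟩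
    rintro v ⟨W, rfl⟩
    exact scost_nonneg y W
  have happ2 : ∀ (y : Fin 3 → ℝ) (Y : ℝ × ℝ), scost y (F y) ≤ ρ * scost y Y := by
    intro y Y
    calc scost y (F y) ≤ ρ * optCost y := happ y
      _ ≤ ρ * scost y Y := mul_le_mul_of_nonneg_left (optCost_le y Y) hρ0
  have hcard : ({i, j, k} : Finset (Fin 3)).card = 3 := by
    rw [Finset.card_insert_of_notMem (by simp [hij, hik]),
        Finset.card_insert_of_notMem (by simp [hjk]), Finset.card_singleton]
  have huniv : (Finset.univ : Finset (Fin 3)) = {i, j, k} :=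
    (Finset.eq_univ_of_card _ (by rw [hcard, Fintype.card_fin])).symm
  have sum3 : ∀ g : Fin 3 → ℝ, ∑ m, g m = g i + g j + g k := by
    intro g
    rw [huniv, Finset.sum_insert (by simp [hij, hik]),
        Finset.sum_insert (by simp [hjk]), Finset.sum_singleton]
    ring
  have scost3 : ∀ (y : Fin 3 → ℝ) (Y : ℝ × ℝ),
      scost y Y = fcost (y i) Y + fcost (y j) Y + fcost (y k) Y := by
    intro y Y
    simpa [scost] using sum3 fun m => fcost (y m) Y
  have fcost_pair_left : ∀ u v : ℝ, fcost u (u, v) = 0 := by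
    intro u v
    unfold fcost
    rw [show ((u,v).1 : ℝ) = u from rfl, sub_self, abs_zero]
    exact min_eq_left (abs_nonneg _)
  have fcost_pair_right : ∀ u v : ℝ, fcost v (u, v) = 0 := by
    intro u v
    unfold fcost
    rw [show ((u,v).2 : ℝ) = v from rfl, sub_self, abs_zero]
    exact min_eq_right (abs_nonneg _)
  have fcost_fac : ∀ (u c : ℝ) (Y : ℝ × ℝ), Y.1 = c ∨ Y.2 = c → fcost u Y ≤ |u - c| := by
    rintro u c Y (h | h)
    · unfold fcost; rw [h]; exact min_le_left _ _
    · unfold fcost; rw [h]; exact min_le_right _ _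
  have fcost_fac_zero : ∀ (u : ℝ) (Y : ℝ × ℝ), Y.1 = u ∨ Y.2 = u → fcost u Y = 0 := by
    intro u Y h
    have h1 := fcost_fac u u Y h
    rw [sub_self, abs_zero] at h1
    exact le_antisymm h1 (fcost_nonneg _ _)
  have fcost_cases : ∀ (u e : ℝ) (Y : ℝ × ℝ), fcost u Y ≤ e → |u - Y.1| ≤ e ∨ |u - Y.2| ≤ e := by
    intro u e Y h
    unfold fcost at h
    exact min_le_iff.mp h
  -- the one-parameter family of instances obtained by moving agent j
  set z : ℝ → (Fin 3 → ℝ) := fun s => Function.update x j s with hzdef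
  have hzi : ∀ s, z s i = a := by
    intro s
    simp only [hzdef]
    rw [Function.update_of_ne hij, hxa]
  have hzj : ∀ s, z s j = s := by
    intro s
    simp only [hzdef]
    rw [Function.update_self]
  have hzk : ∀ s, z s k = x k := by
    intro s
    simp only [hzdef]
    rw [Function.update_of_ne (Ne.symm hjk)]
  -- Lk : the right facility must be near x k
  have Lk : ∀ s, a < s → x k - ρ * (s - a) ≤ (F (z s)).2 := by
    intro s has
    have h1 : scost (z s) (a, x k) ≤ s - a := by
      rw [scost3, hzi, hzj, hzk]
      have e3 : fcost s (a, x k) ≤ s - a := by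
        have h := fcost_fac s a (a, x k) (Or.inl rfl)
        rwa [abs_of_nonneg (by linarith)] at h
      linarith [fcost_pair_left a (x k), fcost_pair_right a (x k)]
    have h2 : fcost (x k) (F (z s)) ≤ ρ * (s - a) := by
      have h3 := happ2 (z s) (a, x k)
      have h4 : ρ * scost (z s) (a, x k) ≤ ρ * (s - a) := mul_le_mul_of_nonneg_left h1 hρ0
      have e := scost3 (z s) (F (z s))
      rw [hzi, hzj, hzk] at e
      linarith [fcost_nonneg a (F (z s)), fcost_nonneg s (F (z s))]
    rcases fcost_cases (x k) (ρ * (s - a)) (F (z s)) h2 with h | h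
    · have h5 : x k - (F (z s)).1 ≤ ρ * (s - a) := le_trans (le_abs_self _) h
      linarith [hord (z s)]
    · have h5 : x k - (F (z s)).2 ≤ ρ * (s - a) := le_trans (le_abs_self _) h
      linarith
  -- Zi : agent i can always force a facility at agent j's reported position
  have Zi : ∀ s, a ≤ s → fcost a (F (z s)) ≤ s - a := by
    intro s has
    set w : Fin 3 → ℝ := Function.update (z s) i s with hw
    have hwi : w i = s := by rw [hw, Function.update_self]
    have hwj : w j = s := by rw [hw, Function.update_of_ne (Ne.symm hij), hzj]
    have hwk : w k = x k := by rw [hw, Function.update_of_ne (Ne.symm hik), hzk]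
    have h0 : scost w (s, x k) = 0 := by
      rw [scost3, hwi, hwj, hwk, fcost_pair_left s (x k), fcost_pair_right s (x k)]
      norm_num
    have h1 : scost w (F w) ≤ 0 := by
      have h := happ2 w (s, x k)
      rw [h0, mul_zero] at h
      exact h
    have e := scost3 w (F w)
    rw [hwi, hwj, hwk] at e
    have h1' : fcost s (F w) + fcost s (F w) + fcost (x k) (F w) ≤ 0 := by
      rw [← e]; exact h1
    have h2 : fcost s (F w) = 0 :=
      le_antisymm (by linarith [fcost_nonneg s (F w), fcost_nonneg (x k) (F w)])
        (fcost_nonneg _ _)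
    have h3 : (F w).1 = s ∨ (F w).2 = s := by
      rcases fcost_cases s 0 (F w) (le_of_eq h2) with h | h
      · left; have h' := abs_nonpos_iff.mp h; linarith
      · right; have h' := abs_nonpos_iff.mp h; linarith
    have h4 : fcost a (F w) ≤ s - a := by
      have h := fcost_fac a s (F w) h3
      rwa [abs_of_nonpos (by linarith), neg_sub] at h
    have h5 := hsp (z s) i s
    rw [hzi] at h5
    rw [← hw] at h5
    exact le_trans h5 h4
  -- HOLE : reverse strategyproofness pins facilities exactly
  have HOLE : ∀ s t : ℝ, a < s → (2 + ρ) * |t - s| < s - a → (t < s ∨ p ≤ s) →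
      ((F (z s)).1 = t ∨ (F (z s)).2 = t) → t = s := by
    intro s t has hcl hside hfact
    by_contra hts
    set Δ := |t - s| with hΔdef
    have hΔpos : 0 < Δ := by rw [hΔdef]; exact abs_pos.mpr (sub_ne_zero.mpr hts)
    have hΔ0 : 0 ≤ Δ := le_of_lt hΔpos
    have hρΔ0 : 0 ≤ ρ * Δ := mul_nonneg hρ0 hΔ0
    have hexp : (2 + ρ) * Δ = 2 * Δ + ρ * Δ := by ring
    have hΔ1 : s - Δ ≤ t := by
      have h := neg_abs_le (t - s)
      rw [← hΔdef] at h
      linarith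
    have hΔ2 : t ≤ s + Δ := by
      have h := le_abs_self (t - s)
      rw [← hΔdef] at h
      linarith
    set w : Fin 3 → ℝ := Function.update (z s) k t with hw
    have hwi : w i = a := by rw [hw, Function.update_of_ne hik, hzi]
    have hwj : w j = s := by rw [hw, Function.update_of_ne hjk, hzj]
    have hwk : w k = t := by rw [hw, Function.update_self]
    have hLW : LeftWS ρ w i j k := by
      refine ⟨?_, ?_⟩
      · rw [hwi, hwj, hwk]
        exact lt_min (by linarith) (by linarith)
      · rw [hwi, hwj, hwk]
        have hminmax : max s t - min s t = Δ := by
          rw [hΔdef, max_sub_min_eq_abs]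
        have hmin : s - Δ ≤ min s t := le_min (by linarith) hΔ1
        rw [hminmax]
        linarith
    have hmed : (F w).2 = s := by
      have hs := hsep w hwi hLW
      rcases hside with hts' | hps
      · by_cases hps' : p ≤ s
        · have h := hs.1 (by rw [hwj]; exact hps')
          rwa [hwj] at h
        · push_neg at hps'
          have h2 := hs.2 (by rw [hwj]; exact hps')
          rw [hwj, hwk] at h2
          have hmm : med3 p s t = s := by
            unfold med3
            rw [min_eq_right hps'.le, max_eq_left hps'.le,
                min_eq_right (by linarith : t ≤ p), max_eq_left hts'.le]
          rw [h2, hmm]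
      · have h := hs.1 (by rw [hwj]; exact hps)
        rwa [hwj] at h
    have happx : scost w (F w) ≤ ρ * Δ := by
      have h1 : scost w (a, s) ≤ Δ := by
        rw [scost3, hwi, hwj, hwk]
        have h3 : fcost t (a, s) ≤ Δ := by
          have h := fcost_fac t s (a, s) (Or.inr rfl)
          rwa [← hΔdef] at h
        linarith [fcost_pair_left a s, fcost_pair_right a s]
      calc scost w (F w) ≤ ρ * scost w (a, s) := happ2 w (a, s)
        _ ≤ ρ * Δ := mul_le_mul_of_nonneg_left h1 hρ0
    have hfaw : fcost a (F w) ≤ ρ * Δ := by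
      have e := scost3 w (F w)
      rw [hwi, hwj, hwk] at e
      linarith [fcost_nonneg s (F w), fcost_nonneg t (F w)]
    have hf1 : |a - (F w).1| ≤ ρ * Δ := by
      rcases fcost_cases a (ρ * Δ) (F w) hfaw with h | h
      · exact h
      · exfalso
        rw [hmed] at h
        rw [abs_of_nonpos (by linarith), neg_sub] at h
        linarith
    have hf1ub : (F w).1 ≤ a + ρ * Δ := by
      have h := le_abs_self ((F w).1 - a)
      rw [abs_sub_comm] at h
      linarith
    have hct : Δ ≤ fcost t (F w) := by
      show Δ ≤ min |t - (F w).1| |t - (F w).2|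
      apply le_min
      · have h1 : Δ ≤ t - (F w).1 := by linarith
        exact le_trans h1 (le_abs_self _)
      · rw [hmed, ← hΔdef]
    have hspk := hsp w k (x k)
    rw [hwk] at hspk
    have hupd : Function.update w k (x k) = z s := by
      rw [hw, Function.update_idem]
      rw [show x k = z s k from (hzk s).symm]
      exact Function.update_eq_self _ _
    rw [hupd] at hspk
    have hzero : fcost t (F (z s)) = 0 := fcost_fac_zero t (F (z s)) hfact
    rw [hzero] at hspk
    linarith
  -- the step size
  set D : ℝ := (x j - a) / (ρ + 3) with hDdef
  have hD : 0 < D := by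
    rw [hDdef]; exact div_pos (by linarith) (by linarith)
  have hD3 : (ρ + 3) * D = x j - a := by
    rw [hDdef]
    field_simp
  have hD2 : (2 + ρ) * D < x j - a := by
    have hexp : (ρ + 3) * D = (2 + ρ) * D + D := by ring
    linarith
  -- STEP : descend the anchor by at most D
  have STEP : ∀ s₀ s : ℝ, ((F (z s₀)).1 = s₀ ∨ (F (z s₀)).2 = s₀) → x j ≤ s → s ≤ s₀ →
      s₀ - s ≤ D → (p ≤ s ∨ s₀ ≤ p) → ((F (z s)).1 = s ∨ (F (z s)).2 = s) := by
    intro s₀ s hfac0 hxjs hss0 hdiff hside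
    have has : a < s := lt_of_lt_of_le haj hxjs
    have hspj := hsp (z s) j s₀
    rw [hzj] at hspj
    have hupd : Function.update (z s) j s₀ = z s₀ := by
      simp only [hzdef]
      rw [Function.update_idem]
    rw [hupd] at hspj
    have hfc : fcost s (F (z s₀)) ≤ s₀ - s := by
      have h := fcost_fac s s₀ (F (z s₀)) hfac0
      rwa [abs_of_nonpos (by linarith), neg_sub] at h
    have hφ : fcost s (F (z s)) ≤ s₀ - s := le_trans hspj hfc
    by_cases hps : p ≤ s
    · rcases fcost_cases s (s₀ - s) (F (z s)) hφ with h | h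
      · have hb : (2 + ρ) * |(F (z s)).1 - s| < s - a := by
          have h' : |(F (z s)).1 - s| ≤ D := by rw [abs_sub_comm]; linarith
          have h'' := mul_le_mul_of_nonneg_left h' (by linarith : (0:ℝ) ≤ 2 + ρ)
          linarith
        exact Or.inl (HOLE s _ has hb (Or.inr hps) (Or.inl rfl))
      · have hb : (2 + ρ) * |(F (z s)).2 - s| < s - a := by
          have h' : |(F (z s)).2 - s| ≤ D := by rw [abs_sub_comm]; linarith
          have h'' := mul_le_mul_of_nonneg_left h' (by linarith : (0:ℝ) ≤ 2 + ρ)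
          linarith
        exact Or.inr (HOLE s _ has hb (Or.inr hps) (Or.inr rfl))
    · have hsltp : s < p := not_le.mp hps
      have hs0p : s₀ ≤ p := hside.resolve_left hps
      have hLk := Lk s has
      have hρsp : ρ * (s - a) ≤ ρ * (p - a) := mul_le_mul_of_nonneg_left (by linarith) hρ0
      have hf2p : p < (F (z s)).2 := by linarith
      rcases fcost_cases s (s₀ - s) (F (z s)) hφ with h | h
      · have hZi := Zi s (le_of_lt has)
        have hf2a : s - a < |a - (F (z s)).2| := by
          rw [abs_of_nonpos (by linarith), neg_sub]
          linarith
        have hf1a : |a - (F (z s)).1| ≤ s - a := by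
          rcases fcost_cases a (s - a) (F (z s)) hZi with h' | h'
          · exact h'
          · linarith
        have hf1s : (F (z s)).1 ≤ s := by
          have h' := le_abs_self ((F (z s)).1 - a)
          rw [abs_sub_comm] at h'
          linarith
        by_cases hf1 : (F (z s)).1 = s
        · exact Or.inl hf1
        · have hf1lt : (F (z s)).1 < s := lt_of_le_of_ne hf1s hf1
          have hb : (2 + ρ) * |(F (z s)).1 - s| < s - a := by
            have h' : |(F (z s)).1 - s| ≤ D := by rw [abs_sub_comm]; linarith
            have h'' := mul_le_mul_of_nonneg_left h' (by linarith : (0:ℝ) ≤ 2 + ρ)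
            linarith
          exact Or.inl (HOLE s _ has hb (Or.inl hf1lt) (Or.inl rfl))
      · exfalso
        have h3 : (F (z s)).2 - s ≤ |s - (F (z s)).2| := by
          rw [abs_sub_comm]
          exact le_abs_self _
        linarith
  -- DESCEND : iterate STEP
  have DESCEND : ∀ c t : ℝ, ((F (z c)).1 = c ∨ (F (z c)).2 = c) → x j ≤ t → t ≤ c →
      (p ≤ t ∨ c ≤ p) → ((F (z t)).1 = t ∨ (F (z t)).2 = t) := by
    intro c t hfc hxjt htc hside
    have key : ∀ n : ℕ, ((F (z (max t (c - (n : ℝ) * D)))).1 = max t (c - (n : ℝ) * D) ∨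
        (F (z (max t (c - (n : ℝ) * D)))).2 = max t (c - (n : ℝ) * D)) := by
      intro n
      induction n with
      | zero =>
        simpa [max_eq_right htc] using hfc
      | succ n ih =>
        have hcast : ((n + 1 : ℕ) : ℝ) = (n : ℝ) + 1 := by push_cast; ring
        rw [hcast]
        have hring : ((n : ℝ) + 1) * D = (n : ℝ) * D + D := by ring
        refine STEP (max t (c - (n : ℝ) * D)) (max t (c - ((n : ℝ) + 1) * D)) ih ?_ ?_ ?_ ?_
        · exact le_trans hxjt (le_max_left _ _)
        · exact max_le_max le_rfl (by linarith [hD.le])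
        · rcases max_cases t (c - (n : ℝ) * D) with ⟨h1, _⟩ | ⟨h1, _⟩
          · rw [h1]
            have h2 := le_max_left t (c - ((n : ℝ) + 1) * D)
            linarith [hD.le]
          · rw [h1]
            have h2 := le_max_right t (c - ((n : ℝ) + 1) * D)
            linarith
        · rcases hside with h | h
          · exact Or.inl (le_trans h (le_max_left _ _))
          · refine Or.inr (max_le (le_trans htc h) ?_)
            have hnd : (0:ℝ) ≤ (n : ℝ) * D := mul_nonneg (Nat.cast_nonneg n) hD.le
            linarith
    obtain ⟨n, hn⟩ := exists_nat_ge ((c - t) / D)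
    have hcn : c - (n : ℝ) * D ≤ t := by
      have h := (div_le_iff₀ hD).mp hn
      linarith
    have hkey := key n
    rwa [max_eq_left hcn] at hkey
  have hzxj : z (x j) = x := by
    simp only [hzdef]
    exact Function.update_eq_self j x
  -- main case split
  by_cases hws : ρ * (x k - x j) < x j - a
  · -- x itself is left-well-separated
    have hpj : p ≤ x j := by
      by_contra hpj
      push_neg at hpj
      have h1 : x k - x j ≤ ρ * (x k - x j) := by
        nlinarith [mul_nonneg (by linarith : (0:ℝ) ≤ ρ - 1) (by linarith : (0:ℝ) ≤ x k - x j)]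
      have h2 : p - a ≤ ρ * (p - a) := by
        nlinarith [mul_nonneg (by linarith : (0:ℝ) ≤ ρ - 1) (by linarith : (0:ℝ) ≤ p - a)]
      linarith
    have hLWx : LeftWS ρ x i j k := by
      refine ⟨?_, ?_⟩
      · rw [hxa]
        exact lt_min haj hak
      · rw [max_eq_right (le_of_lt hxk), min_eq_left (le_of_lt hxk), hxa]
        exact hws
    exact Or.inr ((hsep x hxa hLWx).1 hpj)
  · push_neg at hws
    -- choose a starting anchor s₀ in the dictatorial region
    set E : ℝ := (x k - a) / (2 * (ρ + 1)) with hEdef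
    have hE : 0 < E := by
      rw [hEdef]; exact div_pos (by linarith) (by linarith)
    have hEeq : (ρ + 1) * E = (x k - a) / 2 := by
      rw [hEdef]
      field_simp
    have hexpE : (ρ + 1) * E = ρ * E + E := by ring
    have hρE0 : 0 ≤ ρ * E := mul_nonneg hρ0 hE.le
    have hEhalf : E ≤ (x k - a) / 2 := by linarith
    set s₀ : ℝ := x k - E with hs₀def
    have hs₀k : s₀ < x k := by rw [hs₀def]; linarith
    have h1pa : p - a < x k - p := by
      have h2 : p - a ≤ ρ * (p - a) := by
        nlinarith [mul_nonneg (by linarith : (0:ℝ) ≤ ρ - 1) (by linarith : (0:ℝ) ≤ p - a)]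
      linarith
    have hps₀ : p ≤ s₀ := by
      rw [hs₀def]
      linarith
    have hLWs₀ : ρ * (x k - s₀) < s₀ - a := by
      rw [hs₀def]
      have h2 : x k - (x k - E) = E := by ring
      rw [h2]
      linarith
    have hxjs₀ : x j ≤ s₀ := by
      by_contra hcon
      push_neg at hcon
      have h1 : ρ * (x k - x j) ≤ ρ * E := by
        apply mul_le_mul_of_nonneg_left _ hρ0
        rw [hs₀def] at hcon
        linarith
      linarith
    have hfacs₀ : (F (z s₀)).1 = s₀ ∨ (F (z s₀)).2 = s₀ := by
      right
      have hLW : LeftWS ρ (z s₀) i j k := by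
        refine ⟨?_, ?_⟩
        · rw [hzi, hzj, hzk]
          exact lt_min (lt_of_lt_of_le haj hxjs₀) hak
        · rw [hzi, hzj, hzk, max_eq_right hs₀k.le, min_eq_left hs₀k.le]
          exact hLWs₀
      have h := (hsep (z s₀) (hzi s₀) hLW).1 (by rw [hzj]; exact hps₀)
      rwa [hzj] at h
    have hq := DESCEND s₀ (max (x j) p) hfacs₀ (le_max_left _ _) (max_le hxjs₀ hps₀)
      (Or.inl (le_max_right _ _))
    by_cases hpj : p ≤ x j
    · rw [max_eq_left hpj] at hq
      rwa [hzxj] at hq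
    · push_neg at hpj
      rw [max_eq_right hpj.le] at hq
      have hfin := DESCEND p (x j) hq le_rfl hpj.le (Or.inr le_rfl)
      rwa [hzxj] at hfin
end
end

section
/- Let F be a strategyproof 2-facility mechanism in the star metric S_3 with bounded approximation ratio ρ for 3-agent instances. For any 3-agent instance x in which all three agents lie on at most two branches of S_3, if a facility f of F(x) serves two agents j and k (i.e., f is the facility nearest to both x_j and x_k among the two facilities of F(x)), then f lies on the path segment [x_j, x_k] between the locations of j and k. -/
noncomputable section

/-- A point of the star `S₃`: a distance `x ≥ 0` from the center together with
a branch label (points with `x = 0` all represent the common origin). -/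
abbrev StarPt := NNReal × Fin 3

/-- The star (path) distance: `|x - x'|` on a common branch, `x + x'` across
branches. -/
def starDist (p q : StarPt) : ℝ :=
  if p.2 = q.2 then |(p.1 : ℝ) - (q.1 : ℝ)| else (p.1 : ℝ) + (q.1 : ℝ)

/-- Cost of an agent at `a` under a pair of facilities in `S₃`. -/
def sfcost (a : StarPt) (y : StarPt × StarPt) : ℝ :=
  min (starDist a y.1) (starDist a y.2)

/-- Social cost of a 3-agent instance in `S₃`. -/
def sscost (x : Fin 3 → StarPt) (y : StarPt × StarPt) : ℝ := ∑ i, sfcost (x i) y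

/-- Optimal social cost over all pairs of facility locations in `S₃`. -/
def soptCost (x : Fin 3 → StarPt) : ℝ := ⨅ y : StarPt × StarPt, sscost x y

/-- The interval `[u, v]` in the tree metric `S₃`: the points on the unique
path from `u` to `v`. -/
def seg (u v : StarPt) : Set StarPt :=
  {w | starDist u w + starDist w v = starDist u v}

/-! ### Auxiliary lemmas -/

lemma fin3_third : ∀ j k : Fin 3, j ≠ k → ∃ i, i ≠ j ∧ i ≠ k := by decide

lemma fin3_cover : ∀ a b c i : Fin 3, a ≠ b → a ≠ c → b ≠ c →
    i = a ∨ i = b ∨ i = c := by decide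

lemma starDist_nonneg (p q : StarPt) : 0 ≤ starDist p q := by
  unfold starDist
  split_ifs
  · exact abs_nonneg _
  · positivity

lemma starDist_self (p : StarPt) : starDist p p = 0 := by
  simp [starDist]

lemma starDist_same {p q : StarPt} (h : p.2 = q.2) :
    starDist p q = |(p.1 : ℝ) - (q.1 : ℝ)| := by
  simp [starDist, h]

lemma starDist_diff {p q : StarPt} (h : p.2 ≠ q.2) :
    starDist p q = (p.1 : ℝ) + (q.1 : ℝ) := by
  simp [starDist, h]

lemma starDist_triangle (p q r : StarPt) :
    starDist p r ≤ starDist p q + starDist q r := by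
  have np := NNReal.coe_nonneg p.1
  have nq := NNReal.coe_nonneg q.1
  have nr := NNReal.coe_nonneg r.1
  by_cases h1 : p.2 = q.2 <;> by_cases h2 : q.2 = r.2
  · rw [starDist_same h1, starDist_same h2, starDist_same (h1.trans h2)]
    exact abs_sub_le _ _ _
  · have h3 : p.2 ≠ r.2 := fun hh => h2 (h1.symm.trans hh)
    rw [starDist_same h1, starDist_diff h2, starDist_diff h3]
    rcases abs_cases ((p.1 : ℝ) - (q.1 : ℝ)) with ⟨e, s⟩ | ⟨e, s⟩ <;> rw [e] <;>
      linarith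
  · have h3 : p.2 ≠ r.2 := fun hh => h1 (hh.trans h2.symm)
    rw [starDist_diff h1, starDist_same h2, starDist_diff h3]
    rcases abs_cases ((q.1 : ℝ) - (r.1 : ℝ)) with ⟨e, s⟩ | ⟨e, s⟩ <;> rw [e] <;>
      linarith
  · by_cases h3 : p.2 = r.2
    · rw [starDist_diff h1, starDist_diff h2, starDist_same h3]
      rcases abs_cases ((p.1 : ℝ) - (r.1 : ℝ)) with ⟨e, s⟩ | ⟨e, s⟩ <;> rw [e] <;>
        linarith
    · rw [starDist_diff h1, starDist_diff h2, starDist_diff h3]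
      linarith

lemma sfcost_nonneg (a : StarPt) (y : StarPt × StarPt) : 0 ≤ sfcost a y :=
  le_min (starDist_nonneg _ _) (starDist_nonneg _ _)

lemma sscost_nonneg (x : Fin 3 → StarPt) (y : StarPt × StarPt) : 0 ≤ sscost x y :=
  Finset.sum_nonneg fun _ _ => sfcost_nonneg _ _

lemma soptCost_le (x : Fin 3 → StarPt) (y : StarPt × StarPt) :
    soptCost x ≤ sscost x y := by
  refine ciInf_le ⟨0, ?_⟩ y
  rintro r ⟨y', rfl⟩
  exact sscost_nonneg x y'

/-- If some point `l` has cost `0` under a pair of facilities, then every point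
`u` has cost at most `starDist u l`. -/
lemma serve_near {u l : StarPt} {y : StarPt × StarPt} (h : sfcost l y = 0) :
    sfcost u y ≤ starDist u l := by
  unfold sfcost at h ⊢
  rcases min_eq_iff.mp h with ⟨h0, _⟩ | ⟨h0, _⟩
  · calc min (starDist u y.1) (starDist u y.2) ≤ starDist u y.1 := min_le_left _ _
      _ ≤ starDist u l + starDist l y.1 := starDist_triangle _ _ _
      _ = starDist u l := by rw [h0, add_zero]
  · calc min (starDist u y.1) (starDist u y.2) ≤ starDist u y.2 := min_le_right _ _
      _ ≤ starDist u l + starDist l y.2 := starDist_triangle _ _ _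
      _ = starDist u l := by rw [h0, add_zero]

/-- On an instance with two coincident agents, a bounded-approximation
mechanism must place a facility exactly at the shared location. -/
lemma pinned {F : (Fin 3 → StarPt) → StarPt × StarPt} {ρ : ℝ} (hρ : 1 ≤ ρ)
    (happ : ∀ x : Fin 3 → StarPt, sscost x (F x) ≤ ρ * soptCost x)
    (v : Fin 3 → StarPt) (a b : Fin 3) (hab : a ≠ b) (hv : v a = v b) :
    sfcost (v a) (F v) = 0 := by
  obtain ⟨c, hca, hcb⟩ := fin3_third a b hab
  have hzero : sscost v (v a, v c) = 0 := by
    unfold sscost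
    apply Finset.sum_eq_zero
    intro i _
    rcases fin3_cover a b c i hab (Ne.symm hca) (Ne.symm hcb) with rfl | rfl | rfl
    · unfold sfcost
      rw [starDist_self]
      exact min_eq_left (starDist_nonneg _ _)
    · rw [← hv]
      unfold sfcost
      rw [starDist_self]
      exact min_eq_left (starDist_nonneg _ _)
    · unfold sfcost
      rw [starDist_self]
      exact min_eq_right (starDist_nonneg _ _)
  have h1 : soptCost v ≤ 0 := (soptCost_le v (v a, v c)).trans_eq hzero
  have h3 : 0 ≤ ρ * (-soptCost v) := mul_nonneg (by linarith) (by linarith)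
  rw [mul_neg] at h3
  have h2 : sscost v (F v) ≤ 0 := by linarith [happ v]
  have hterm : sfcost (v a) (F v) ≤ sscost v (F v) := by
    unfold sscost
    exact Finset.single_le_sum (f := fun i => sfcost (v i) (F v))
      (fun i _ => sfcost_nonneg _ _) (Finset.mem_univ a)
  have := sfcost_nonneg (v a) (F v)
  linarith

/-- Each agent's cost is at most its distance to any other agent. -/
lemma L1 {F : (Fin 3 → StarPt) → StarPt × StarPt} {ρ : ℝ} (hρ : 1 ≤ ρ)
    (hsp : ∀ (x : Fin 3 → StarPt) (i : Fin 3) (y : StarPt),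
      sfcost (x i) (F x) ≤ sfcost (x i) (F (Function.update x i y)))
    (happ : ∀ x : Fin 3 → StarPt, sscost x (F x) ≤ ρ * soptCost x)
    (x : Fin 3 → StarPt) (a b : Fin 3) (hab : a ≠ b) :
    sfcost (x a) (F x) ≤ starDist (x a) (x b) := by
  have h := hsp x a (x b)
  set v := Function.update x a (x b) with hvdef
  have hva : v a = x b := by simp [hvdef]
  have hvb : v b = x b := by
    rw [hvdef]
    exact Function.update_of_ne (Ne.symm hab) _ _
  have hpin : sfcost (v a) (F v) = 0 := pinned hρ happ v a b hab (by rw [hva, hvb])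
  rw [hva] at hpin
  exact h.trans (serve_near hpin)

/-- The key chain for the third-branch case. -/
lemma case3 (F : (Fin 3 → StarPt) → StarPt × StarPt) (ρ : ℝ) (hρ : 1 ≤ ρ)
    (hsp : ∀ (x : Fin 3 → StarPt) (i : Fin 3) (y : StarPt),
      sfcost (x i) (F x) ≤ sfcost (x i) (F (Function.update x i y)))
    (happ : ∀ x : Fin 3 → StarPt, sscost x (F x) ≤ ρ * soptCost x)
    (x : Fin 3 → StarPt) (j k i : Fin 3) (hjk : j ≠ k) (hij : i ≠ j) (hik : i ≠ k)
    (f : StarPt) (hf : f = (F x).1 ∨ f = (F x).2)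
    (hfk : starDist (x k) f = sfcost (x k) (F x))
    (hg1 : f.2 ≠ (x j).2) (hg2 : f.2 ≠ (x k).2) (hb : (x j).2 ≠ (x k).2)
    (hfr : 0 < (f.1 : ℝ))
    (hi2 : (x i).2 = (x k).2) : False := by
  set z : StarPt := (f.1 / 2, f.2) with hzdef
  have hz1 : (z.1 : ℝ) = (f.1 : ℝ) / 2 := by
    rw [hzdef]
    push_cast
    ring
  have hz2 : z.2 = f.2 := rfl
  set V := Function.update x k z with hVdef
  have hVk : V k = z := by simp [hVdef]
  have hVj : V j = x j := by
    rw [hVdef]; exact Function.update_of_ne hjk _ _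
  have hVi : V i = x i := by
    rw [hVdef]; exact Function.update_of_ne hik _ _
  -- (a): both facilities of F V are at distance ≥ q + fr from x k
  have hdkf : starDist (x k) f = ((x k).1 : ℝ) + (f.1 : ℝ) :=
    starDist_diff (fun hh => hg2 hh.symm)
  have ha : ((x k).1 : ℝ) + (f.1 : ℝ) ≤ sfcost (x k) (F V) := by
    have h := hsp x k z
    rw [← hfk, hdkf] at h
    exact h
  have ha1 : ((x k).1 : ℝ) + (f.1 : ℝ) ≤ starDist (x k) (F V).1 :=
    ha.trans (min_le_left _ _)
  have ha2 : ((x k).1 : ℝ) + (f.1 : ℝ) ≤ starDist (x k) (F V).2 :=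
    ha.trans (min_le_right _ _)
  -- (b): some facility of F V is within fr/2 of z
  have hbz : sfcost z (F V) ≤ (f.1 : ℝ) / 2 := by
    have h := hsp V k (x k)
    rw [hVk] at h
    have hVV : Function.update V k (x k) = x := by
      rw [hVdef, Function.update_idem]
      exact Function.update_eq_self k x
    rw [hVV] at h
    refine h.trans ?_
    have hdzf : starDist z f = (f.1 : ℝ) / 2 := by
      rw [starDist_same hz2, hz1]
      rw [show (f.1 : ℝ) / 2 - (f.1 : ℝ) = -((f.1 : ℝ) / 2) by ring, abs_neg,
        abs_of_nonneg (by linarith)]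
    rcases hf with hf1 | hf1
    · calc sfcost z (F x) ≤ starDist z (F x).1 := min_le_left _ _
        _ = (f.1 : ℝ) / 2 := by rw [← hf1, hdzf]
    · calc sfcost z (F x) ≤ starDist z (F x).2 := min_le_right _ _
        _ = (f.1 : ℝ) / 2 := by rw [← hf1, hdzf]
  -- (c): some facility of F V is within p + fr/2 of x j
  have hcj : sfcost (x j) (F V) ≤ ((x j).1 : ℝ) + (f.1 : ℝ) / 2 := by
    have h := hsp V j z
    rw [hVj] at h
    set T := Function.update V j z with hT
    have hTj : T j = z := by simp [hT]
    have hTk : T k = z := by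
      rw [hT, Function.update_of_ne (Ne.symm hjk) _ _]
      exact hVk
    have hpin : sfcost (T j) (F T) = 0 := pinned hρ happ T j k hjk (by rw [hTj, hTk])
    rw [hTj] at hpin
    have hsn : sfcost (x j) (F T) ≤ starDist (x j) z := serve_near hpin
    have hdxz : starDist (x j) z = ((x j).1 : ℝ) + (f.1 : ℝ) / 2 := by
      rw [starDist_diff (fun hh => hg1 (hz2 ▸ hh.symm)), hz1]
    linarith
  -- classification of the facility near z
  have hclassA : ∀ w : StarPt, starDist z w ≤ (f.1 : ℝ) / 2 →
      ((x k).1 : ℝ) + (f.1 : ℝ) ≤ starDist (x k) w →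
      w.2 = f.2 ∧ (w.1 : ℝ) = (f.1 : ℝ) := by
    intro w hw1 hw2
    by_cases hww : w.2 = f.2
    · refine ⟨hww, ?_⟩
      have e1 : starDist z w = |(f.1 : ℝ) / 2 - (w.1 : ℝ)| := by
        rw [starDist_same (hz2.trans hww.symm), hz1]
      have e2 : starDist (x k) w = ((x k).1 : ℝ) + (w.1 : ℝ) := by
        refine starDist_diff ?_
        intro hh
        exact hg2 (by rw [← hww, hh])
      rw [e1] at hw1
      rw [e2] at hw2
      have hle : (w.1 : ℝ) ≤ (f.1 : ℝ) := by
        have := (abs_le.mp hw1).1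
        linarith
      linarith
    · exfalso
      have e1 : starDist z w = (f.1 : ℝ) / 2 + (w.1 : ℝ) := by
        rw [starDist_diff (fun hh => hww (hh.symm.trans hz2)), hz1]
      rw [e1] at hw1
      have hw0 : (w.1 : ℝ) = 0 :=
        le_antisymm (by linarith) (NNReal.coe_nonneg _)
      by_cases hkw : (x k).2 = w.2
      · rw [starDist_same hkw, hw0, sub_zero,
          abs_of_nonneg (NNReal.coe_nonneg _)] at hw2
        linarith
      · rw [starDist_diff hkw, hw0] at hw2
        linarith
  -- classification of the facility near x j
  have hclassB : ∀ w : StarPt, starDist (x j) w ≤ ((x j).1 : ℝ) + (f.1 : ℝ) / 2 →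
      ((x k).1 : ℝ) + (f.1 : ℝ) ≤ starDist (x k) w →
      w.2 = (x j).2 ∧ (f.1 : ℝ) ≤ (w.1 : ℝ) := by
    intro w hw1 hw2
    rcases fin3_cover (x j).2 (x k).2 f.2 w.2 hb (fun h => hg1 h.symm)
      (fun h => hg2 h.symm) with hw | hw | hw
    · refine ⟨hw, ?_⟩
      have e2 : starDist (x k) w = ((x k).1 : ℝ) + (w.1 : ℝ) := by
        refine starDist_diff ?_
        rw [hw]
        exact Ne.symm hb
      rw [e2] at hw2
      linarith
    · exfalso
      have e1 : starDist (x j) w = ((x j).1 : ℝ) + (w.1 : ℝ) := by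
        refine starDist_diff ?_
        rw [hw]
        exact hb
      have e2 : starDist (x k) w = |((x k).1 : ℝ) - (w.1 : ℝ)| :=
        starDist_same hw.symm
      rw [e1] at hw1
      rw [e2] at hw2
      rcases abs_cases (((x k).1 : ℝ) - (w.1 : ℝ)) with ⟨e, _⟩ | ⟨e, _⟩ <;>
        rw [e] at hw2 <;>
        linarith [NNReal.coe_nonneg (x k).1, NNReal.coe_nonneg w.1]
    · exfalso
      have e1 : starDist (x j) w = ((x j).1 : ℝ) + (w.1 : ℝ) := by
        refine starDist_diff ?_
        rw [hw]
        exact Ne.symm hg1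
      have e2 : starDist (x k) w = ((x k).1 : ℝ) + (w.1 : ℝ) := by
        refine starDist_diff ?_
        rw [hw]
        exact Ne.symm hg2
      rw [e1] at hw1
      rw [e2] at hw2
      linarith
  -- distance from x i to the two classified facilities
  have hfarA : ∀ w : StarPt, w.2 = f.2 → (w.1 : ℝ) = (f.1 : ℝ) →
      starDist (x i) w = ((x i).1 : ℝ) + (f.1 : ℝ) := by
    intro w h1 h2
    rw [starDist_diff (by rw [hi2, h1]; exact Ne.symm hg2), h2]
  have hfarB : ∀ w : StarPt, w.2 = (x j).2 → (f.1 : ℝ) ≤ (w.1 : ℝ) →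
      ((x i).1 : ℝ) + (f.1 : ℝ) ≤ starDist (x i) w := by
    intro w h1 h2
    rw [starDist_diff (by rw [hi2, h1]; exact fun hh => hb hh.symm)]
    linarith
  -- both facilities of F V are far from x i
  unfold sfcost at hbz hcj
  have hmain : ((x i).1 : ℝ) + (f.1 : ℝ) ≤ sfcost (x i) (F V) := by
    unfold sfcost
    rcases min_le_iff.mp hbz with hB | hB <;> rcases min_le_iff.mp hcj with hC | hC
    · exfalso
      obtain ⟨hA1, hA2⟩ := hclassA (F V).1 hB ha1
      have e : starDist (x j) (F V).1 = ((x j).1 : ℝ) + (f.1 : ℝ) := by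
        rw [starDist_diff (by rw [hA1]; exact fun hh => hg1 hh.symm), hA2]
      rw [e] at hC
      linarith
    · obtain ⟨hA1, hA2⟩ := hclassA (F V).1 hB ha1
      obtain ⟨hB1, hB2⟩ := hclassB (F V).2 hC ha2
      exact le_min (le_of_eq (hfarA _ hA1 hA2).symm) (hfarB _ hB1 hB2)
    · obtain ⟨hA1, hA2⟩ := hclassA (F V).2 hB ha2
      obtain ⟨hB1, hB2⟩ := hclassB (F V).1 hC ha1
      exact le_min (hfarB _ hB1 hB2) (le_of_eq (hfarA _ hA1 hA2).symm)
    · exfalso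
      obtain ⟨hA1, hA2⟩ := hclassA (F V).2 hB ha2
      have e : starDist (x j) (F V).2 = ((x j).1 : ℝ) + (f.1 : ℝ) := by
        rw [starDist_diff (by rw [hA1]; exact fun hh => hg1 hh.symm), hA2]
      rw [e] at hC
      linarith
  -- final strategyproofness step: agent i moves to z
  have hfin := hsp V i z
  rw [hVi] at hfin
  set T' := Function.update V i z with hT'
  have hT'i : T' i = z := by simp [hT']
  have hT'k : T' k = z := by
    rw [hT', Function.update_of_ne (Ne.symm hik) _ _]
    exact hVk
  have hpin : sfcost (T' i) (F T') = 0 :=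
    pinned hρ happ T' i k hik (by rw [hT'i, hT'k])
  rw [hT'i] at hpin
  have hsn : sfcost (x i) (F T') ≤ starDist (x i) z := serve_near hpin
  have hdiz : starDist (x i) z = ((x i).1 : ℝ) + (f.1 : ℝ) / 2 := by
    rw [starDist_diff (by rw [hi2, hz2]; exact fun hh => hg2 hh.symm), hz1]
  linarith

/-- Proposition `tree-collinear`. -/
theorem tree_collinear (F : (Fin 3 → StarPt) → StarPt × StarPt)
    (ρ : ℝ) (hρ : 1 ≤ ρ)
    (hsp : ∀ (x : Fin 3 → StarPt) (i : Fin 3) (y : StarPt),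
      sfcost (x i) (F x) ≤ sfcost (x i) (F (Function.update x i y)))
    (happ : ∀ x : Fin 3 → StarPt, sscost x (F x) ≤ ρ * soptCost x)
    (x : Fin 3 → StarPt)
    (hcol : ∃ b1 b2 : Fin 3, ∀ a : Fin 3,
      (x a).1 = 0 ∨ (x a).2 = b1 ∨ (x a).2 = b2)
    (j k : Fin 3) (hjk : j ≠ k) (f : StarPt)
    (hf : f = (F x).1 ∨ f = (F x).2)
    (hfj : starDist (x j) f = sfcost (x j) (F x))
    (hfk : starDist (x k) f = sfcost (x k) (F x)) :
    f ∈ seg (x j) (x k) := by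
  by_contra hseg
  have hne : ¬ (starDist (x j) f + starDist f (x k) = starDist (x j) (x k)) :=
    fun h => hseg h
  have htri := starDist_triangle (x j) f (x k)
  have hgt : starDist (x j) (x k) < starDist (x j) f + starDist f (x k) :=
    lt_of_le_of_ne htri (Ne.symm hne)
  obtain ⟨i, hij, hik⟩ := fin3_third j k hjk
  have hDjA : starDist (x j) f ≤ starDist (x j) (x k) := by
    rw [hfj]
    exact L1 hρ hsp happ x j k hjk
  have hDkA : starDist (x k) f ≤ starDist (x k) (x j) := by
    rw [hfk]
    exact L1 hρ hsp happ x k j (Ne.symm hjk)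
  have hDjI : starDist (x j) f ≤ starDist (x j) (x i) := by
    rw [hfj]
    exact L1 hρ hsp happ x j i (Ne.symm hij)
  by_cases h12 : (x j).2 = (x k).2
  · by_cases hgj : f.2 = (x j).2
    · -- everything on one branch
      have e1 : starDist (x j) f = |((x j).1 : ℝ) - (f.1 : ℝ)| :=
        starDist_same hgj.symm
      have e2 : starDist f (x k) = |(f.1 : ℝ) - ((x k).1 : ℝ)| :=
        starDist_same (hgj.trans h12)
      have e3 : starDist (x j) (x k) = |((x j).1 : ℝ) - ((x k).1 : ℝ)| :=
        starDist_same h12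
      have e4 : starDist (x k) (x j) = |((x k).1 : ℝ) - ((x j).1 : ℝ)| :=
        starDist_same h12.symm
      have e5 : starDist (x k) f = |((x k).1 : ℝ) - (f.1 : ℝ)| :=
        starDist_same (h12.symm.trans hgj.symm)
      rw [e1, e3] at hDjA
      rw [e5, e4] at hDkA
      rw [e1, e2, e3] at hgt
      rw [abs_sub_comm ((x k).1 : ℝ) (f.1 : ℝ),
        abs_sub_comm ((x k).1 : ℝ) ((x j).1 : ℝ)] at hDkA
      rcases abs_cases (((x j).1 : ℝ) - (f.1 : ℝ)) with ⟨u1, v1⟩ | ⟨u1, v1⟩ <;>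
        rcases abs_cases ((f.1 : ℝ) - ((x k).1 : ℝ)) with ⟨u2, v2⟩ | ⟨u2, v2⟩ <;>
        rcases abs_cases (((x j).1 : ℝ) - ((x k).1 : ℝ)) with ⟨u3, v3⟩ | ⟨u3, v3⟩ <;>
        linarith
    · -- f on a different branch than the common agents' branch
      have hgk : f.2 ≠ (x k).2 := fun h => hgj (h.trans h12.symm)
      have e1 : starDist (x j) f = ((x j).1 : ℝ) + (f.1 : ℝ) :=
        starDist_diff (fun h => hgj h.symm)
      have e2 : starDist f (x k) = (f.1 : ℝ) + ((x k).1 : ℝ) := starDist_diff hgk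
      have e3 : starDist (x j) (x k) = |((x j).1 : ℝ) - ((x k).1 : ℝ)| :=
        starDist_same h12
      have e4 : starDist (x k) (x j) = |((x k).1 : ℝ) - ((x j).1 : ℝ)| :=
        starDist_same h12.symm
      have e5 : starDist (x k) f = ((x k).1 : ℝ) + (f.1 : ℝ) :=
        starDist_diff (fun h => hgk h.symm)
      rw [e1, e3] at hDjA
      rw [e5, e4] at hDkA
      rw [e1, e2, e3] at hgt
      rcases abs_cases (((x j).1 : ℝ) - ((x k).1 : ℝ)) with ⟨u1, v1⟩ | ⟨u1, v1⟩ <;>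
        rcases abs_cases (((x k).1 : ℝ) - ((x j).1 : ℝ)) with ⟨u2, v2⟩ | ⟨u2, v2⟩ <;>
        linarith [NNReal.coe_nonneg f.1, NNReal.coe_nonneg (x j).1,
          NNReal.coe_nonneg (x k).1]
  · by_cases hgj : f.2 = (x j).2
    · -- f beyond x j on j's branch
      have hgk : f.2 ≠ (x k).2 := fun h => h12 (hgj.symm.trans h)
      have e1 : starDist (x j) f = |((x j).1 : ℝ) - (f.1 : ℝ)| :=
        starDist_same hgj.symm
      have e2 : starDist f (x k) = (f.1 : ℝ) + ((x k).1 : ℝ) := starDist_diff hgk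
      have e3 : starDist (x j) (x k) = ((x j).1 : ℝ) + ((x k).1 : ℝ) :=
        starDist_diff h12
      have e4 : starDist (x k) (x j) = ((x k).1 : ℝ) + ((x j).1 : ℝ) :=
        starDist_diff (Ne.symm h12)
      have e5 : starDist (x k) f = ((x k).1 : ℝ) + (f.1 : ℝ) :=
        starDist_diff (fun h => hgk h.symm)
      rw [e5, e4] at hDkA
      rw [e1, e2, e3] at hgt
      rcases abs_cases (((x j).1 : ℝ) - (f.1 : ℝ)) with ⟨u1, v1⟩ | ⟨u1, v1⟩ <;>
        linarith
    · by_cases hgk : f.2 = (x k).2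
      · -- f beyond x k on k's branch
        have e1 : starDist (x j) f = ((x j).1 : ℝ) + (f.1 : ℝ) :=
          starDist_diff (fun h => hgj h.symm)
        have e2 : starDist f (x k) = |(f.1 : ℝ) - ((x k).1 : ℝ)| :=
          starDist_same hgk
        have e3 : starDist (x j) (x k) = ((x j).1 : ℝ) + ((x k).1 : ℝ) :=
          starDist_diff h12
        rw [e1, e3] at hDjA
        rw [e1, e2, e3] at hgt
        rcases abs_cases ((f.1 : ℝ) - ((x k).1 : ℝ)) with ⟨u1, v1⟩ | ⟨u1, v1⟩ <;>
          linarith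
      · -- f strictly on the third branch: the interesting case
        have e1 : starDist (x j) f = ((x j).1 : ℝ) + (f.1 : ℝ) :=
          starDist_diff (fun h => hgj h.symm)
        have e2 : starDist f (x k) = (f.1 : ℝ) + ((x k).1 : ℝ) := starDist_diff hgk
        have e3 : starDist (x j) (x k) = ((x j).1 : ℝ) + ((x k).1 : ℝ) :=
          starDist_diff h12
        have e4 : starDist (x k) (x j) = ((x k).1 : ℝ) + ((x j).1 : ℝ) :=
          starDist_diff (Ne.symm h12)
        have e5 : starDist (x k) f = ((x k).1 : ℝ) + (f.1 : ℝ) :=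
          starDist_diff (fun h => hgk h.symm)
        have hfrpos : (0 : ℝ) < (f.1 : ℝ) := by
          rw [e1, e2, e3] at hgt
          linarith
        have hppos : (0 : ℝ) < ((x j).1 : ℝ) := by
          rw [e5, e4] at hDkA
          linarith
        have hqpos : (0 : ℝ) < ((x k).1 : ℝ) := by
          rw [e1, e3] at hDjA
          linarith
        obtain ⟨b1, b2, hcl⟩ := hcol
        have hi1 : (x i).1 ≠ 0 := by
          intro h0
          have hd : starDist (x j) (x i) = ((x j).1 : ℝ) := by
            by_cases hh : (x j).2 = (x i).2
            · rw [starDist_same hh, h0]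
              simp [abs_of_nonneg (NNReal.coe_nonneg (x j).1)]
            · rw [starDist_diff hh, h0]
              simp
          rw [e1, hd] at hDjI
          linarith
        have hbj : (x j).2 = b1 ∨ (x j).2 = b2 := by
          rcases hcl j with h | h | h
          · exfalso
            rw [h] at hppos
            simp at hppos
          · exact Or.inl h
          · exact Or.inr h
        have hbk : (x k).2 = b1 ∨ (x k).2 = b2 := by
          rcases hcl k with h | h | h
          · exfalso
            rw [h] at hqpos
            simp at hqpos
          · exact Or.inl h
          · exact Or.inr h
        have hbi : (x i).2 = b1 ∨ (x i).2 = b2 := by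
          rcases hcl i with h | h | h
          · exact absurd h hi1
          · exact Or.inl h
          · exact Or.inr h
        have hiside : (x i).2 = (x j).2 ∨ (x i).2 = (x k).2 := by
          rcases hbj with h1 | h1 <;> rcases hbk with h2 | h2 <;>
            rcases hbi with h3 | h3
          · exact absurd (h1.trans h2.symm) h12
          · exact absurd (h1.trans h2.symm) h12
          · exact Or.inl (h3.trans h1.symm)
          · exact Or.inr (h3.trans h2.symm)
          · exact Or.inr (h3.trans h2.symm)
          · exact Or.inl (h3.trans h1.symm)
          · exact absurd (h1.trans h2.symm) h12
          · exact absurd (h1.trans h2.symm) h12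
        rcases hiside with hside | hside
        · exact case3 F ρ hρ hsp happ x k j i (Ne.symm hjk) hik hij f hf hfj
            hgk hgj (Ne.symm h12) hfrpos hside
        · exact case3 F ρ hρ hsp happ x j k i hjk hij hik f hf hfk
            hgj hgk h12 hfrpos hside
end
end
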